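/- Let H be a Hilbert space, Π an orthogonal projection, 𝒜 a densely defined closed antisymmetric operator with ΠAΠ = 0 (where composition is defined), and η > 0. Define A = -η(η² - Π𝒜²Π)^{-1} Π𝒜 (on the domain of 𝒜*). Then for every f in the domain, ‖Af‖ ≤ (1/2)‖(1-Π)f‖ and ‖𝒜Af‖ ≤ η‖(1-Π)f‖, and moreover ΠA = A. -/

import Mathlib

open RealInnerProductSpace

/-- DMS-type regularization bound: with `P` an orthogonal projection, `𝒜`
antisymmetric with `P𝒜P = 0`, `η > 0`, and `A = -η(η² - P𝒜²P)⁻¹ P𝒜`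
(characterized by the equation `(η² - P𝒜²P)(A f) = -η P𝒜 f`), one has
`‖A f‖ ≤ ½‖(1-P)f‖`, `‖𝒜 A f‖ ≤ η‖(1-P)f‖` and `P A = A`. -/
theorem stmt_7 {H : Type*} [NormedAddCommGroup H] [InnerProductSpace ℝ H]
    [CompleteSpace H]
    (P 𝒜 A : H →L[ℝ] H)
    (hPsymm : ∀ x y : H, ⟪P x, y⟫ = ⟪x, P y⟫)
    (hPidem : P.comp P = P)
    (hanti : ∀ u v : H, ⟪𝒜 u, v⟫ = -⟪u, 𝒜 v⟫)
    (hPAP : (P.comp 𝒜).comp P = 0)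
    (η : ℝ) (hη : 0 < η)
    (hdef : ∀ f : H, η^2 • A f - P (𝒜 (𝒜 (P (A f)))) = -η • P (𝒜 f)) :
    ∀ f : H, ‖A f‖ ≤ (1/2) * ‖f - P f‖
      ∧ ‖𝒜 (A f)‖ ≤ η * ‖f - P f‖
      ∧ P (A f) = A f := by
  intro f
  set u := A f with hu
  have hdefu := hdef f
  have hPP : ∀ x, P (P x) = P x := fun x =>
    congrFun (congrArg DFunLike.coe hPidem) x
  -- P u = u
  have hPu : P u = u := by
    have h1 := congrArg P hdefu
    simp only [map_sub, map_smul] at h1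
    rw [hPP, hPP] at h1
    have h2 : η^2 • (P u - u) = 0 := by
      rw [smul_sub, hu]
      have := h1.trans hdefu.symm
      linear_combination (norm := abel_nf) this
    have hη2 : η^2 ≠ 0 := by positivity
    rcases smul_eq_zero.mp h2 with h | h
    · exact absurd h hη2
    · exact sub_eq_zero.mp h
  -- P (𝒜 u) = 0
  have hPAu : P (𝒜 u) = 0 := by
    have h := congrFun (congrArg DFunLike.coe hPAP) u
    simp only [ContinuousLinearMap.comp_apply, ContinuousLinearMap.zero_apply] at h
    rwa [hPu] at h
  -- key identity
  have e1 : ⟪P (𝒜 (𝒜 (P u))), u⟫ = -‖𝒜 u‖^2 := by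
    rw [hPsymm, hPu, hanti, real_inner_self_eq_norm_sq]
  have e2 : ⟪P (𝒜 f), u⟫ = -⟪f - P f, 𝒜 u⟫ := by
    rw [hPsymm, hPu, hanti, inner_sub_left]
    have : ⟪P f, 𝒜 u⟫ = 0 := by rw [hPsymm, hPAu, inner_zero_right]
    rw [this]; ring
  have key : η^2 * ‖u‖^2 + ‖𝒜 u‖^2 = η * ⟪f - P f, 𝒜 u⟫ := by
    have h := congrArg (fun w => ⟪w, u⟫) hdefu
    simp only [inner_sub_left, real_inner_smul_left] at h
    rw [e1, e2, real_inner_self_eq_norm_sq] at h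
    linarith [h]
  have hb := real_inner_le_norm (f - P f) (𝒜 u)
  have hg : (0:ℝ) ≤ ‖f - P f‖ := norm_nonneg _
  have hAu : (0:ℝ) ≤ ‖𝒜 u‖ := norm_nonneg _
  have hun : (0:ℝ) ≤ ‖u‖ := norm_nonneg _
  have kle : η^2 * ‖u‖^2 + ‖𝒜 u‖^2 ≤ η * (‖f - P f‖ * ‖𝒜 u‖) := by
    rw [key]
    nlinarith
  refine ⟨?_, ?_, hPu⟩
  · have hsq : η^2 * ‖u‖^2 ≤ η^2 * (‖f - P f‖/2)^2 := by
      nlinarith [sq_nonneg (‖𝒜 u‖ - η * ‖f - P f‖ / 2)]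
    have hη2 : (0:ℝ) < η^2 := by positivity
    have hsq2 : ‖u‖^2 ≤ (‖f - P f‖/2)^2 := (mul_le_mul_iff_right₀ hη2).mp hsq
    nlinarith [hsq2, sq_nonneg (‖u‖ + ‖f - P f‖/2)]
  · nlinarith [mul_nonneg hη.le hg, sq_nonneg (η * ‖u‖)]
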